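/- Let I ⊆ ℝ be an interval and let h, u, α : I → ℝ be differentiable with h(x) > 0 for all x ∈ I and (h u)′(x) = 0 for all x ∈ I. Then for every x ∈ I one has (2 h u α)′(x) − u(x) · (h α)′(x) = u(x) · h(x)^2 · (α/h)′(x). Consequently, if in addition (2 h u α)′(x) = u(x) · (h α)′(x) on I, then at each x ∈ I either u(x) = 0 or (α/h)′(x) = 0. -/

import Mathlib

open Set

/-- In the SWME1 steady moment equation: with `h > 0` and constant discharge
`(h u)' = 0`, one has `(2 h u α)'(x) - u(x) (h α)'(x) = u(x) h(x)² (α/h)'(x)`;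
consequently, if `(2 h u α)' = u (h α)'` on `I`, then at each point either
`u = 0` or `(α/h)' = 0`. -/
theorem swme1_moment_identity
    (I : Set ℝ) (hI : I.OrdConnected) (h u α : ℝ → ℝ)
    (hh : ∀ x ∈ I, DifferentiableAt ℝ h x)
    (hu : ∀ x ∈ I, DifferentiableAt ℝ u x)
    (hα : ∀ x ∈ I, DifferentiableAt ℝ α x)
    (hpos : ∀ x ∈ I, 0 < h x)
    (hq : ∀ x ∈ I, deriv (fun y => h y * u y) x = 0) :
    (∀ x ∈ I,
      deriv (fun y => 2 * h y * u y * α y) x - u x * deriv (fun y => h y * α y) x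
        = u x * h x ^ 2 * deriv (fun y => α y / h y) x) ∧
    ((∀ x ∈ I, deriv (fun y => 2 * h y * u y * α y) x
        = u x * deriv (fun y => h y * α y) x) →
      ∀ x ∈ I, u x = 0 ∨ deriv (fun y => α y / h y) x = 0) := by
  have key : ∀ x ∈ I,
      deriv (fun y => 2 * h y * u y * α y) x - u x * deriv (fun y => h y * α y) x
        = u x * h x ^ 2 * deriv (fun y => α y / h y) x := by
    intro x hx
    have dh := (hh x hx).hasDerivAt
    have du := (hu x hx).hasDerivAt
    have dα := (hα x hx).hasDerivAt
    have h0 : h x ≠ 0 := (hpos x hx).ne'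
    have e1 : deriv (fun y => 2 * h y * u y * α y) x
        = (2 * deriv h x * u x + 2 * h x * deriv u x) * α x
          + 2 * h x * u x * deriv α x := by
      have : HasDerivAt (fun y => 2 * h y * u y * α y)
          ((2 * deriv h x * u x + 2 * h x * deriv u x) * α x
            + 2 * h x * u x * deriv α x) x := by
        have := ((dh.const_mul 2).fun_mul du).fun_mul dα
        convert this using 1
      exact this.deriv
    have e2 : deriv (fun y => h y * α y) x
        = deriv h x * α x + h x * deriv α x := (dh.mul dα).deriv
    have e3 : deriv (fun y => α y / h y) x
        = (deriv α x * h x - α x * deriv h x) / h x ^ 2 := (dα.div dh h0).deriv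
    have hq' : deriv h x * u x + h x * deriv u x = 0 := by
      have := hq x hx
      rwa [(dh.fun_mul du).deriv] at this
    rw [e1, e2, e3]
    field_simp
    linear_combination (2 * α x) * hq'
  refine ⟨key, fun heq x hx => ?_⟩
  have : u x * h x ^ 2 * deriv (fun y => α y / h y) x = 0 := by
    rw [← key x hx, heq x hx]; ring
  rcases mul_eq_zero.mp this with h1 | h2
  · rcases mul_eq_zero.mp h1 with h3 | h4
    · exact Or.inl h3
    · exact absurd h4 (pow_ne_zero 2 (hpos x hx).ne')
  · exact Or.inr h2
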